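/- If 0 < L₁ < L₂ and, for i = 1, 2, cᵢ denotes the unique real solution of h(c − Lᵢ) = h(c) − Lᵢ·h′(c), then h(c₁ − L₁) − h(c₁) < h(c₂ − L₂) − h(c₂); that is, the function G(L) = h(c(L) − L) − h(c(L)) is strictly increasing on (0, ∞). -/

import Mathlib

/-- The hill function `h(x) = arccos(tanh x)`. -/
noncomputable def hill (x : ℝ) : ℝ := Real.arccos (Real.tanh x)

/-- The derivative of the hill function: `h'(x) = -1/cosh x`. -/
noncomputable def hill' (x : ℝ) : ℝ := -1 / Real.cosh x

lemma tanh_sq_lt_one (x : ℝ) : Real.tanh x ^ 2 < 1 := by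
  have hc := Real.cosh_pos x
  have h1 : Real.cosh x ^ 2 = Real.sinh x ^ 2 + 1 := Real.cosh_sq x
  rw [Real.tanh_eq_sinh_div_cosh, div_pow, div_lt_one (by positivity)]
  nlinarith [Real.cosh_pos x]

lemma tanh_ne_one (x : ℝ) : Real.tanh x ≠ 1 := by
  intro h
  have := tanh_sq_lt_one x
  rw [h] at this; norm_num at this

lemma tanh_ne_neg_one (x : ℝ) : Real.tanh x ≠ -1 := by
  intro h
  have := tanh_sq_lt_one x
  rw [h] at this; norm_num at this

lemma hasDerivAt_tanh (x : ℝ) : HasDerivAt Real.tanh (1 / Real.cosh x ^ 2) x := by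
  have hc := Real.cosh_pos x
  have h : HasDerivAt (fun y => Real.sinh y / Real.cosh y)
      ((Real.cosh x * Real.cosh x - Real.sinh x * Real.sinh x) / Real.cosh x ^ 2) x :=
    (Real.hasDerivAt_sinh x).div (Real.hasDerivAt_cosh x) hc.ne'
  have heq : (Real.cosh x * Real.cosh x - Real.sinh x * Real.sinh x) / Real.cosh x ^ 2
      = 1 / Real.cosh x ^ 2 := by
    have := Real.cosh_sq_sub_sinh_sq x
    rw [show Real.cosh x * Real.cosh x - Real.sinh x * Real.sinh x
        = Real.cosh x ^ 2 - Real.sinh x ^ 2 by ring, this]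
  rw [heq] at h
  convert h using 2 with y
  exact (Real.tanh_eq_sinh_div_cosh y)

lemma hill_hasDerivAt (x : ℝ) : HasDerivAt hill (hill' x) x := by
  have hc := Real.cosh_pos x
  have h : HasDerivAt (fun y => Real.arccos (Real.tanh y))
      (-(1 / Real.sqrt (1 - Real.tanh x ^ 2)) * (1 / Real.cosh x ^ 2)) x :=
    (Real.hasDerivAt_arccos (tanh_ne_neg_one x) (tanh_ne_one x)).comp x (hasDerivAt_tanh x)
  have h1 : 1 - Real.tanh x ^ 2 = 1 / Real.cosh x ^ 2 := by
    have h2 : Real.cosh x ^ 2 = Real.sinh x ^ 2 + 1 := Real.cosh_sq x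
    rw [Real.tanh_eq_sinh_div_cosh, div_pow]
    field_simp
    linarith
  have h3 : Real.sqrt (1 - Real.tanh x ^ 2) = 1 / Real.cosh x := by
    rw [h1]
    rw [show (1 : ℝ) / Real.cosh x ^ 2 = (1 / Real.cosh x) ^ 2 by ring]
    exact Real.sqrt_sq (by positivity)
  rw [h3] at h
  have h4 : -(1 / (1 / Real.cosh x)) * (1 / Real.cosh x ^ 2) = hill' x := by
    rw [one_div_one_div, hill']
    field_simp
  rw [h4] at h
  exact h

lemma hill_strictAnti : StrictAnti hill := by
  apply strictAnti_of_deriv_neg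
  intro x
  rw [(hill_hasDerivAt x).deriv, hill']
  have := Real.cosh_pos x
  rw [neg_div, neg_lt, neg_zero]
  positivity

/-- `hill'` is increasing in `|x|`. -/
lemma hill'_lt_of_abs_lt {a b : ℝ} (h : |a| < |b|) : hill' a < hill' b := by
  have h2 : Real.cosh a < Real.cosh b := Real.cosh_lt_cosh.2 h
  have ha := Real.cosh_pos a
  have hb := Real.cosh_pos b
  rw [hill', hill', div_lt_div_iff₀ ha hb]
  nlinarith

lemma hill'_eq_iff_abs_eq {a b : ℝ} (h : hill' a = hill' b) : |a| = |b| := by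
  by_contra hne
  rcases lt_or_gt_of_ne hne with hlt | hgt
  · exact absurd h (ne_of_lt (hill'_lt_of_abs_lt hlt))
  · exact absurd h.symm (ne_of_lt (hill'_lt_of_abs_lt hgt))

/-- Mean value theorem for `hill`. -/
lemma hill_mvt {a b : ℝ} (hab : a < b) :
    ∃ ξ ∈ Set.Ioo a b, hill b - hill a = hill' ξ * (b - a) := by
  obtain ⟨ξ, hξ, hval⟩ := exists_hasDerivAt_eq_slope hill hill' hab
    (fun x _ => (hill_hasDerivAt x).continuousAt.continuousWithinAt)
    (fun x _ => hill_hasDerivAt x)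
  refine ⟨ξ, hξ, ?_⟩
  rw [hval, div_mul_eq_mul_div, mul_div_assoc, div_self (sub_ne_zero.2 hab.ne'), mul_one]

/-- Any solution of the tangency equation satisfies `0 < c` and `2c < L`. -/
lemma solution_bounds {L c : ℝ} (hL : 0 < L)
    (hc : hill (c - L) = hill c - L * hill' c) : 0 < c ∧ 2 * c < L := by
  have hlt : c - L < c := by linarith
  obtain ⟨ξ, hξ, hval⟩ := hill_mvt hlt
  have h1 : hill c - hill (c - L) = L * hill' c := by linarith [hc]
  have h2 : hill' ξ * L = L * hill' c := by
    rw [show c - (c - L) = L by ring] at hval; linarith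
  have h3 : hill' ξ = hill' c :=
    mul_right_cancel₀ hL.ne' (by linarith : hill' ξ * L = hill' c * L)
  have habs : |ξ| = |c| := hill'_eq_iff_abs_eq h3
  have hξc : ξ ≠ c := ne_of_lt hξ.2
  have hξeq : ξ = -c := by
    rcases abs_eq_abs.1 habs with h | h
    · exact absurd h hξc
    · exact h
  constructor
  · -- ξ = -c < c
    have := hξ.2; rw [hξeq] at this; linarith
  · -- c - L < ξ = -c
    have := hξ.1; rw [hξeq] at this; linarith

/-- Key lemma B1: left of the second intersection, the graph is below the tangent. -/
lemma below_tangent_left {L c x : ℝ} (hL : 0 < L)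
    (hc : hill (c - L) = hill c - L * hill' c) (hx : x < c - L) :
    hill x < hill c + hill' c * (x - c) := by
  obtain ⟨hcpos, hcL⟩ := solution_bounds hL hc
  obtain ⟨η, hη, hval⟩ := hill_mvt hx
  -- η < c - L < -c ≤ 0, so |η| > |c|, hence hill' η > hill' c
  have hη1 : η < -c := by have := hη.2; linarith
  have habs : |c| < |η| := by
    rw [abs_of_pos hcpos, abs_of_neg (by linarith : η < 0)]; linarith
  have h4 : hill' c < hill' η := hill'_lt_of_abs_lt habs
  -- hill (c-L) - hill x = hill' η * (c - L - x)
  have h5 : 0 < c - L - x := by linarith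
  nlinarith [hval, hc]

/-- The graph is strictly above the tangent at a positive point, on the nonnegatives. -/
lemma above_tangent_pos {c x : ℝ} (hc : 0 < c) (hx : 0 ≤ x) (hne : x ≠ c) :
    hill c + hill' c * (x - c) < hill x := by
  rcases lt_or_gt_of_ne hne with h | h
  · -- x < c
    obtain ⟨ξ, hξ, hval⟩ := hill_mvt h
    have habs : |ξ| < |c| := by
      rw [abs_of_pos hc, abs_of_nonneg (le_trans hx hξ.1.le)]; exact hξ.2
    have := hill'_lt_of_abs_lt habs
    nlinarith [hval, hξ.2]
  · -- c < x
    obtain ⟨ξ, hξ, hval⟩ := hill_mvt h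
    have habs : |c| < |ξ| := by
      rw [abs_of_pos hc, abs_of_pos (lt_trans hc hξ.1)]; exact hξ.1
    have := hill'_lt_of_abs_lt habs
    nlinarith [hval, hξ.1]

/-- If a point `x` on the graph is strictly above the tangent line of a solution `(c, L)`,
then `x > c - L`. -/
lemma gt_of_above {L c x : ℝ} (hL : 0 < L)
    (hc : hill (c - L) = hill c - L * hill' c)
    (h : hill c + hill' c * (x - c) < hill x) : c - L < x := by
  rcases lt_trichotomy x (c - L) with hlt | heq | hgt
  · exact absurd (below_tangent_left hL hc hlt) (not_lt_of_gt h)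
  · subst heq
    rw [hc] at h
    nlinarith
  · exact hgt

/-- If `0 < L₁ < L₂` and `cᵢ` solves `h (c - Lᵢ) = h c - Lᵢ * h' c`, then
`h (c₁ - L₁) - h c₁ < h (c₂ - L₂) - h c₂`: the function
`G(L) = h (c(L) - L) - h (c(L))` is strictly increasing on `(0, ∞)`. -/
theorem hill_G_strictMono {L₁ L₂ c₁ c₂ : ℝ}
    (hL₁ : 0 < L₁) (hL₁₂ : L₁ < L₂)
    (hc₁ : hill (c₁ - L₁) = hill c₁ - L₁ * hill' c₁)
    (hc₂ : hill (c₂ - L₂) = hill c₂ - L₂ * hill' c₂) :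
    hill (c₁ - L₁) - hill c₁ < hill (c₂ - L₂) - hill c₂ := by
  have hL₂ : 0 < L₂ := lt_trans hL₁ hL₁₂
  obtain ⟨hc₁pos, hc₁L⟩ := solution_bounds hL₁ hc₁
  obtain ⟨hc₂pos, hc₂L⟩ := solution_bounds hL₂ hc₂
  -- Step II: c₁ < c₂
  have hcc : c₁ < c₂ := by
    rcases lt_trichotomy c₁ c₂ with h | h | h
    · exact h
    · -- c₁ = c₂ : contradiction
      exfalso
      subst h
      have hx : c₁ - L₂ < c₁ - L₁ := by linarith
      have := below_tangent_left hL₁ hc₁ hx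
      rw [hc₂] at this
      nlinarith
    · -- c₂ < c₁ : contradiction
      exfalso
      -- tangent at c₂ is above tangent at c₁ for x ≤ c₂
      set x := c₂ - L₂ with hxdef
      have h1 : hill c₁ + hill' c₁ * (c₂ - c₁) < hill c₂ :=
        above_tangent_pos hc₁pos hc₂pos.le (ne_of_lt h)
      have h2 : hill' c₂ < hill' c₁ := by
        apply hill'_lt_of_abs_lt
        rw [abs_of_pos hc₂pos, abs_of_pos hc₁pos]; exact h
      have h3 : hill c₁ + hill' c₁ * (x - c₁) < hill x := by
        have hx2 : hill x = hill c₂ + hill' c₂ * (x - c₂) := by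
          rw [hxdef, hc₂]; ring
        nlinarith [h1, h2, hL₂]
      have h4 := gt_of_above hL₁ hc₁ h3
      -- c₁ - L₁ < c₂ - L₂, so c₂ - c₁ > L₂ - L₁ > 0, contradicting c₂ < c₁
      rw [hxdef] at h4
      linarith
  -- Step III: c₂ - L₂ < c₁ - L₁
  have hkey : c₂ - L₂ < c₁ - L₁ := by
    set x := c₁ - L₁ with hxdef
    have h1 : hill c₂ + hill' c₂ * (c₁ - c₂) < hill c₁ :=
      above_tangent_pos hc₂pos hc₁pos.le hcc.ne
    have h2 : hill' c₁ < hill' c₂ := by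
      apply hill'_lt_of_abs_lt
      rw [abs_of_pos hc₂pos, abs_of_pos hc₁pos]; exact hcc
    have h3 : hill c₂ + hill' c₂ * (x - c₂) < hill x := by
      have hx1 : hill x = hill c₁ + hill' c₁ * (x - c₁) := by
        rw [hxdef, hc₁]; ring
      nlinarith [h1, h2, hL₁]
    exact gt_of_above hL₂ hc₂ h3
  -- Finish: hill is strictly decreasing
  have hA : hill (c₁ - L₁) < hill (c₂ - L₂) := hill_strictAnti hkey
  have hB : hill c₂ < hill c₁ := hill_strictAnti hcc
  linarith
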